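/- Let λ₁, λ₂ > 0 with λ₁ + λ₂ = 1, let φ₁, φ₂ > 0, Θ ∈ (0, π), θ_c ∈ ℝ, d > 0, and ε ∈ {+1, -1}. Define the 4×4 complex matrix A = d·(csc Θ)² · M where M has entries: M₁₁ = √(λ₂/λ₁)·(φ₂/φ₁), M₂₂ = √(λ₁/λ₂)·(φ₂/φ₁), M₃₃ = √(λ₂/λ₁)·(φ₁/φ₂), M₄₄ = √(λ₁/λ₂)·(φ₁/φ₂), M₁₃ = √(λ₂/λ₁)·cos Θ·exp(i·θ_c), M₂₄ = √(λ₁/λ₂)·cos Θ·exp(i·θ_c), M₁₄ = ε·sin Θ·exp(i·θ_c), M₂₃ = -ε·sin Θ·exp(i·θ_c), with M Hermitian (lower entries conjugates) and M₁₂ = M₃₄ = 0. Then A is positive semi-definite. -/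

import Mathlib

set_option maxHeartbeats 1000000

open Complex
open scoped ComplexOrder

theorem stmt1 (lam1 lam2 phi1 phi2 Θ θc d ε : ℝ)
    (h1 : 0 < lam1) (h2 : 0 < lam2) (hsum : lam1 + lam2 = 1)
    (hphi1 : 0 < phi1) (hphi2 : 0 < phi2)
    (hΘ : Θ ∈ Set.Ioo 0 Real.pi) (hd : 0 < d) (hε : ε = 1 ∨ ε = -1) :
    (((d * (Real.sin Θ)⁻¹ ^ 2 : ℝ) : ℂ) •
      (!![((Real.sqrt (lam2 / lam1) * (phi2 / phi1) : ℝ) : ℂ), 0,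
            ((Real.sqrt (lam2 / lam1) * Real.cos Θ : ℝ) : ℂ) * Complex.exp (Complex.I * (θc : ℂ)),
            ((ε * Real.sin Θ : ℝ) : ℂ) * Complex.exp (Complex.I * (θc : ℂ));
          0, ((Real.sqrt (lam1 / lam2) * (phi2 / phi1) : ℝ) : ℂ),
            (((-ε) * Real.sin Θ : ℝ) : ℂ) * Complex.exp (Complex.I * (θc : ℂ)),
            ((Real.sqrt (lam1 / lam2) * Real.cos Θ : ℝ) : ℂ) * Complex.exp (Complex.I * (θc : ℂ));
          ((Real.sqrt (lam2 / lam1) * Real.cos Θ : ℝ) : ℂ) * Complex.exp (-(Complex.I * (θc : ℂ))),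
            (((-ε) * Real.sin Θ : ℝ) : ℂ) * Complex.exp (-(Complex.I * (θc : ℂ))),
            ((Real.sqrt (lam2 / lam1) * (phi1 / phi2) : ℝ) : ℂ), 0;
          ((ε * Real.sin Θ : ℝ) : ℂ) * Complex.exp (-(Complex.I * (θc : ℂ))),
            ((Real.sqrt (lam1 / lam2) * Real.cos Θ : ℝ) : ℂ) * Complex.exp (-(Complex.I * (θc : ℂ))),
            0, ((Real.sqrt (lam1 / lam2) * (phi1 / phi2) : ℝ) : ℂ)] :
        Matrix (Fin 4) (Fin 4) ℂ)).PosSemidef := by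
  obtain ⟨hΘ0, hΘπ⟩ := hΘ
  have hsin : 0 < Real.sin Θ := Real.sin_pos_of_pos_of_lt_pi hΘ0 hΘπ
  set sa := Real.sqrt (lam2 / lam1) with hsa
  set sb := Real.sqrt (lam1 / lam2) with hsb
  have hsa0 : 0 ≤ sa := Real.sqrt_nonneg _
  have hsb0 : 0 ≤ sb := Real.sqrt_nonneg _
  have hab : sa * sb = 1 := by
    rw [hsa, hsb, ← Real.sqrt_mul (by positivity)]
    rw [show lam2 / lam1 * (lam1 / lam2) = 1 by field_simp]
    exact Real.sqrt_one
  set s : ℝ := Real.sqrt d / Real.sin Θ with hsdef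
  set p1 : ℝ := Real.sqrt (sa * (phi2 / phi1)) with hp1def
  set p2 : ℝ := Real.sqrt (sb * (phi2 / phi1)) with hp2def
  set q1 : ℝ := Real.sqrt (sa * (phi1 / phi2)) with hq1def
  set q2 : ℝ := Real.sqrt (sb * (phi1 / phi2)) with hq2def
  have hs : s * s = d * (Real.sin Θ)⁻¹ ^ 2 := by
    rw [hsdef, div_mul_div_comm, Real.mul_self_sqrt hd.le, div_eq_mul_inv]
    ring
  have sqmul : ∀ u v : ℝ, 0 ≤ u → Real.sqrt u * Real.sqrt v = Real.sqrt (u * v) :=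
    fun u v hu => (Real.sqrt_mul hu v).symm
  have hp1 : p1 * p1 = sa * (phi2 / phi1) := Real.mul_self_sqrt (by positivity)
  have hp2 : p2 * p2 = sb * (phi2 / phi1) := Real.mul_self_sqrt (by positivity)
  have hq1 : q1 * q1 = sa * (phi1 / phi2) := Real.mul_self_sqrt (by positivity)
  have hq2 : q2 * q2 = sb * (phi1 / phi2) := Real.mul_self_sqrt (by positivity)
  have hp1q1 : p1 * q1 = sa := by
    rw [hp1def, hq1def, sqmul _ _ (by positivity),
      show sa * (phi2 / phi1) * (sa * (phi1 / phi2)) = sa * sa by field_simp,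
      Real.sqrt_mul_self hsa0]
  have hp1q2 : p1 * q2 = 1 := by
    rw [hp1def, hq2def, sqmul _ _ (by positivity),
      show sa * (phi2 / phi1) * (sb * (phi1 / phi2)) = sa * sb by field_simp,
      hab, Real.sqrt_one]
  have hp2q1 : p2 * q1 = 1 := by
    rw [hp2def, hq1def, sqmul _ _ (by positivity),
      show sb * (phi2 / phi1) * (sa * (phi1 / phi2)) = sa * sb by field_simp,
      hab, Real.sqrt_one]
  have hp2q2 : p2 * q2 = sb := by
    rw [hp2def, hq2def, sqmul _ _ (by positivity),
      show sb * (phi2 / phi1) * (sb * (phi1 / phi2)) = sb * sb by field_simp,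
      Real.sqrt_mul_self hsb0]
  have hε2 : ε * ε = 1 := by rcases hε with h | h <;> rw [h] <;> norm_num
  have hpy : Real.cos Θ * Real.cos Θ + Real.sin Θ * Real.sin Θ = 1 := by
    have := Real.sin_sq_add_cos_sq Θ; nlinarith
  set e : ℂ := Complex.exp (Complex.I * (θc : ℂ)) with hedef
  set e' : ℂ := Complex.exp (-(Complex.I * (θc : ℂ))) with he'def
  have hconj : (starRingEnd ℂ) e' = e := by
    rw [he'def, hedef, ← Complex.exp_conj, map_neg, map_mul, Complex.conj_I,
      Complex.conj_ofReal, neg_mul, neg_neg]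
  have hconj2 : (starRingEnd ℂ) e = e' := by
    rw [he'def, hedef, ← Complex.exp_conj, map_mul, Complex.conj_I,
      Complex.conj_ofReal, neg_mul]
  have hee : e * e' = 1 := by
    rw [hedef, he'def, ← Complex.exp_add, add_neg_cancel, Complex.exp_zero]
  have HS : (s:ℂ) * s = (d:ℂ) * (Complex.sin (Θ:ℂ))⁻¹ ^ 2 := by exact_mod_cast hs
  have HP1 : (p1:ℂ) * p1 = (sa:ℂ) * ((phi2:ℂ)/(phi1:ℂ)) := by exact_mod_cast hp1
  have HP2 : (p2:ℂ) * p2 = (sb:ℂ) * ((phi2:ℂ)/(phi1:ℂ)) := by exact_mod_cast hp2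
  have HQ1 : (q1:ℂ) * q1 = (sa:ℂ) * ((phi1:ℂ)/(phi2:ℂ)) := by exact_mod_cast hq1
  have HQ2 : (q2:ℂ) * q2 = (sb:ℂ) * ((phi1:ℂ)/(phi2:ℂ)) := by exact_mod_cast hq2
  have HP1Q1 : (p1:ℂ) * q1 = (sa:ℂ) := by exact_mod_cast hp1q1
  have HP1Q2 : (p1:ℂ) * q2 = 1 := by exact_mod_cast hp1q2
  have HP2Q1 : (p2:ℂ) * q1 = 1 := by exact_mod_cast hp2q1
  have HP2Q2 : (p2:ℂ) * q2 = (sb:ℂ) := by exact_mod_cast hp2q2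
  have Hε : (ε:ℂ) * ε = 1 := by exact_mod_cast hε2
  have HPY : Complex.cos (Θ:ℂ) * Complex.cos (Θ:ℂ) +
      Complex.sin (Θ:ℂ) * Complex.sin (Θ:ℂ) = 1 := by exact_mod_cast hpy
  have HPYE : (Complex.cos (Θ:ℂ) * Complex.cos (Θ:ℂ) +
      Complex.sin (Θ:ℂ) * Complex.sin (Θ:ℂ)) * (e * e') = 1 := by
    rw [HPY, one_mul, hee]
  have HA1 : (s:ℂ)*s*((p1:ℂ)*p1) = (d:ℂ) * (Complex.sin (Θ:ℂ))⁻¹ ^ 2 * ((sa:ℂ)*((phi2:ℂ)/(phi1:ℂ))) := by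
    rw [HS, HP1]
  have HA2 : (s:ℂ)*s*((p1:ℂ)*q1) = (d:ℂ) * (Complex.sin (Θ:ℂ))⁻¹ ^ 2 * (sa:ℂ) := by
    rw [HS, HP1Q1]
  have HA3 : (s:ℂ)*s*((p1:ℂ)*q2) = (d:ℂ) * (Complex.sin (Θ:ℂ))⁻¹ ^ 2 := by
    rw [HS, HP1Q2, mul_one]
  have HA4 : (s:ℂ)*s*((p2:ℂ)*p2) = (d:ℂ) * (Complex.sin (Θ:ℂ))⁻¹ ^ 2 * ((sb:ℂ)*((phi2:ℂ)/(phi1:ℂ))) := by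
    rw [HS, HP2]
  have HA5 : (s:ℂ)*s*((p2:ℂ)*q1) = (d:ℂ) * (Complex.sin (Θ:ℂ))⁻¹ ^ 2 := by
    rw [HS, HP2Q1, mul_one]
  have HA6 : (s:ℂ)*s*((p2:ℂ)*q2) = (d:ℂ) * (Complex.sin (Θ:ℂ))⁻¹ ^ 2 * (sb:ℂ) := by
    rw [HS, HP2Q2]
  have HA7 : (s:ℂ)*s*((q1:ℂ)*q1) = (d:ℂ) * (Complex.sin (Θ:ℂ))⁻¹ ^ 2 * ((sa:ℂ)*((phi1:ℂ)/(phi2:ℂ))) := by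
    rw [HS, HQ1]
  have HA8 : (s:ℂ)*s*((q2:ℂ)*q2) = (d:ℂ) * (Complex.sin (Θ:ℂ))⁻¹ ^ 2 * ((sb:ℂ)*((phi1:ℂ)/(phi2:ℂ))) := by
    rw [HS, HQ2]
  have HA7e : (s:ℂ)*s*((q1:ℂ)*q1)*((ε:ℂ)*ε) = (d:ℂ) * (Complex.sin (Θ:ℂ))⁻¹ ^ 2 * ((sa:ℂ)*((phi1:ℂ)/(phi2:ℂ))) := by
    rw [Hε, mul_one, HA7]
  have HA8e : (s:ℂ)*s*((q2:ℂ)*q2)*((ε:ℂ)*ε) = (d:ℂ) * (Complex.sin (Θ:ℂ))⁻¹ ^ 2 * ((sb:ℂ)*((phi1:ℂ)/(phi2:ℂ))) := by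
    rw [Hε, mul_one, HA8]
  set x : Fin 4 → ℂ := ![((s * p1 : ℝ) : ℂ), 0, ((s * q1 * Real.cos Θ : ℝ) : ℂ) * e',
    ((ε * s * q2 * Real.sin Θ : ℝ) : ℂ) * e'] with hx
  set y : Fin 4 → ℂ := ![0, ((s * p2 : ℝ) : ℂ), ((-(ε * s * q1 * Real.sin Θ) : ℝ) : ℂ) * e',
    ((s * q2 * Real.cos Θ : ℝ) : ℂ) * e'] with hy
  set B : Matrix (Fin 4) (Fin 2) ℂ := Matrix.of fun i k => ![x, y] k i with hB
  have key : (((d * (Real.sin Θ)⁻¹ ^ 2 : ℝ) : ℂ) •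
      (!![((sa * (phi2 / phi1) : ℝ) : ℂ), 0,
            ((sa * Real.cos Θ : ℝ) : ℂ) * e, ((ε * Real.sin Θ : ℝ) : ℂ) * e;
          0, ((sb * (phi2 / phi1) : ℝ) : ℂ),
            (((-ε) * Real.sin Θ : ℝ) : ℂ) * e, ((sb * Real.cos Θ : ℝ) : ℂ) * e;
          ((sa * Real.cos Θ : ℝ) : ℂ) * e', (((-ε) * Real.sin Θ : ℝ) : ℂ) * e',
            ((sa * (phi1 / phi2) : ℝ) : ℂ), 0;
          ((ε * Real.sin Θ : ℝ) : ℂ) * e', ((sb * Real.cos Θ : ℝ) : ℂ) * e',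
            0, ((sb * (phi1 / phi2) : ℝ) : ℂ)] : Matrix (Fin 4) (Fin 4) ℂ))
      = B * B.conjTranspose := by
    ext i j
    fin_cases i <;> fin_cases j <;>
      simp [hB, Matrix.mul_apply, Fin.sum_univ_two, Matrix.conjTranspose_apply, hx, hy,
        Matrix.smul_apply, map_mul, hconj, hconj2, Complex.conj_ofReal]
    all_goals push_cast
    all_goals try simp only [map_mul, ← Complex.cos_conj, ← Complex.sin_conj, Complex.conj_ofReal]
    · linear_combination -HA1
    · linear_combination -(Complex.cos (Θ:ℂ) * e * HA2)
    · linear_combination -((ε:ℂ) * Complex.sin (Θ:ℂ) * e * HA3)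
    · linear_combination -HA4
    · linear_combination -((ε:ℂ) * Complex.sin (Θ:ℂ) * e * HA5)
    · linear_combination -(Complex.cos (Θ:ℂ) * e * HA6)
    · linear_combination -(Complex.cos (Θ:ℂ) * e' * HA2)
    · linear_combination -((ε:ℂ) * Complex.sin (Θ:ℂ) * e' * HA5)
    · linear_combination -((Complex.cos (Θ:ℂ))^2 * e' * e * HA7) -
        ((Complex.sin (Θ:ℂ))^2 * e' * e * HA7e) -
        (((d:ℂ) * (Complex.sin (Θ:ℂ))⁻¹^2 * (sa:ℂ) * ((phi1:ℂ)/(phi2:ℂ))) * HPYE)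
    · ring
    · linear_combination -((ε:ℂ) * Complex.sin (Θ:ℂ) * e' * HA3)
    · linear_combination -(Complex.cos (Θ:ℂ) * e' * HA6)
    · ring
    · linear_combination -((Complex.cos (Θ:ℂ))^2 * e' * e * HA8) -
        ((Complex.sin (Θ:ℂ))^2 * e' * e * HA8e) -
        (((d:ℂ) * (Complex.sin (Θ:ℂ))⁻¹^2 * (sb:ℂ) * ((phi1:ℂ)/(phi2:ℂ))) * HPYE)

  rw [key]
  exact Matrix.posSemidef_self_mul_conjTranspose B
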